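/- Curve-degree of x^{2n} on the quadratic graph y = φ(x), deg φ = 2 (degree claim underlying Proposition 4.1, case m = 1, d = 2): Suppose Polynomial.degree φ = 2 and let n ≥ 1. Then: (a) there exists Q ∈ R with totalDegree Q ≤ n and x^(2n) − Q ∈ I_1; and (b) for every Q ∈ R with x^(2n) − Q ∈ I_1, one has n ≤ totalDegree Q. Hence the minimal degree of x^{2n} on the curve y = φ(x) equals n. -/
import Mathlib

open MvPolynomial Polynomial

private lemma totalDegree_aeval_X_le (p : Polynomial ℝ) :
    (Polynomial.aeval (MvPolynomial.X 0 : MvPolynomial (Fin 2) ℝ) p).totalDegree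
      ≤ p.natDegree := by
  rw [Polynomial.aeval_def, Polynomial.eval₂_eq_sum_range]
  refine le_trans (MvPolynomial.totalDegree_finset_sum _ _) ?_
  refine Finset.sup_le fun i hi => ?_
  simp only [Finset.mem_range] at hi
  calc ((algebraMap ℝ (MvPolynomial (Fin 2) ℝ)) (p.coeff i) *
        (MvPolynomial.X 0) ^ i).totalDegree
      ≤ ((algebraMap ℝ (MvPolynomial (Fin 2) ℝ)) (p.coeff i)).totalDegree +
        ((MvPolynomial.X 0 : MvPolynomial (Fin 2) ℝ) ^ i).totalDegree :=
        MvPolynomial.totalDegree_mul _ _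
    _ ≤ 0 + i * 1 := by
        gcongr
        · exact le_of_eq (MvPolynomial.totalDegree_C _)
        · exact le_trans (MvPolynomial.totalDegree_pow _ _)
            (by rw [MvPolynomial.totalDegree_X])
    _ ≤ p.natDegree := by omega

private lemma natDegree_aeval_le (f : Fin 2 → Polynomial ℝ)
    (hf : ∀ i, (f i).natDegree ≤ 2) (Q : MvPolynomial (Fin 2) ℝ) :
    (MvPolynomial.aeval f Q).natDegree ≤ 2 * Q.totalDegree := by
  rw [MvPolynomial.aeval_def, MvPolynomial.eval₂_eq]
  refine le_trans (Polynomial.natDegree_sum_le _ _) ?_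
  rw [Finset.fold_max_le]
  refine ⟨Nat.zero_le _, fun d hd => ?_⟩
  calc ((algebraMap ℝ (Polynomial ℝ)) (MvPolynomial.coeff d Q) *
          ∏ i ∈ d.support, f i ^ d i).natDegree
      ≤ ((algebraMap ℝ (Polynomial ℝ)) (MvPolynomial.coeff d Q)).natDegree +
        (∏ i ∈ d.support, f i ^ d i).natDegree := Polynomial.natDegree_mul_le
    _ ≤ 0 + ∑ i ∈ d.support, (f i ^ d i).natDegree := by
        gcongr
        · exact le_of_eq (Polynomial.natDegree_C _)
        · exact Polynomial.natDegree_prod_le _ _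
    _ ≤ ∑ i ∈ d.support, d i * 2 := by
        rw [zero_add]
        refine Finset.sum_le_sum fun i _ => ?_
        calc (f i ^ d i).natDegree ≤ d i * (f i).natDegree :=
              Polynomial.natDegree_pow_le
          _ ≤ d i * 2 := by gcongr; exact hf i
    _ = 2 * ∑ i ∈ d.support, d i := by rw [← Finset.sum_mul, mul_comm]
    _ ≤ 2 * Q.totalDegree := by
        gcongr
        exact MvPolynomial.le_totalDegree hd

/-- The minimal degree of `x^{2n}` on the quadratic graph `y = φ(x)`,
`deg φ = 2`, equals `n`. -/
theorem curve_degree_x_pow_two_n_m1_d2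
    (φ : Polynomial ℝ) (hφ : φ.degree = 2) (n : ℕ) (hn : 1 ≤ n) :
    (∃ Q : MvPolynomial (Fin 2) ℝ, Q.totalDegree ≤ n ∧
      (MvPolynomial.X 0 : MvPolynomial (Fin 2) ℝ) ^ (2 * n) - Q ∈
        Ideal.span {(MvPolynomial.X 1 : MvPolynomial (Fin 2) ℝ) ^ 1 -
          Polynomial.aeval (MvPolynomial.X 0 : MvPolynomial (Fin 2) ℝ) φ}) ∧
    (∀ Q : MvPolynomial (Fin 2) ℝ,
      (MvPolynomial.X 0 : MvPolynomial (Fin 2) ℝ) ^ (2 * n) - Q ∈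
        Ideal.span {(MvPolynomial.X 1 : MvPolynomial (Fin 2) ℝ) ^ 1 -
          Polynomial.aeval (MvPolynomial.X 0 : MvPolynomial (Fin 2) ℝ) φ} →
      n ≤ Q.totalDegree) := by
  have hφ0 : φ ≠ 0 := fun h => by simp [h] at hφ
  have hnd : φ.natDegree = 2 := Polynomial.natDegree_eq_of_degree_eq_some hφ
  set x : MvPolynomial (Fin 2) ℝ := MvPolynomial.X 0 with hx
  set y : MvPolynomial (Fin 2) ℝ := MvPolynomial.X 1 with hy
  set c : ℝ := φ.leadingCoeff with hc
  have hc0 : c ≠ 0 := Polynomial.leadingCoeff_ne_zero.mpr hφ0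
  set ψ : Polynomial ℝ := φ.eraseLead with hψ
  have hψdeg : ψ.natDegree ≤ 1 := by
    have h := Polynomial.eraseLead_natDegree_le φ
    rw [hnd] at h
    exact h
  have hsplit : ψ + Polynomial.C c * Polynomial.X ^ 2 = φ := by
    have := Polynomial.eraseLead_add_C_mul_X_pow φ
    rwa [hnd] at this
  set Ψ : MvPolynomial (Fin 2) ℝ := Polynomial.aeval x ψ with hΨ
  set Φ : MvPolynomial (Fin 2) ℝ := Polynomial.aeval x φ with hΦ
  have hΨdeg : Ψ.totalDegree ≤ 1 := le_trans (totalDegree_aeval_X_le ψ) hψdeg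
  have hCc : MvPolynomial.C c * x ^ 2 = Φ - Ψ := by
    have := congrArg (Polynomial.aeval x) hsplit
    rw [map_add, map_mul, map_pow, Polynomial.aeval_C, Polynomial.aeval_X,
      MvPolynomial.algebraMap_eq] at this
    rw [← hΨ, ← hΦ] at this
    rw [eq_sub_iff_add_eq]
    linear_combination this
  constructor
  · refine ⟨MvPolynomial.C ((c ^ n)⁻¹) * (y - Ψ) ^ n, ?_, ?_⟩
    · calc (MvPolynomial.C ((c ^ n)⁻¹) * (y - Ψ) ^ n).totalDegree
          ≤ (MvPolynomial.C ((c ^ n)⁻¹) : MvPolynomial (Fin 2) ℝ).totalDegree +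
            ((y - Ψ) ^ n).totalDegree := MvPolynomial.totalDegree_mul _ _
        _ ≤ 0 + n * 1 := by
            gcongr
            · exact le_of_eq (MvPolynomial.totalDegree_C _)
            · refine le_trans (MvPolynomial.totalDegree_pow _ _) ?_
              gcongr
              rw [sub_eq_add_neg]
              refine le_trans (MvPolynomial.totalDegree_add _ _) ?_
              rw [MvPolynomial.totalDegree_neg]
              refine max_le ?_ hΨdeg
              rw [hy, MvPolynomial.totalDegree_X]
        _ ≤ n := by omega
    · rw [pow_one, Ideal.mem_span_singleton]
      have hdvd : (MvPolynomial.C c * x ^ 2) - (y - Ψ) ∣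
          (MvPolynomial.C c * x ^ 2) ^ n - (y - Ψ) ^ n :=
        sub_dvd_pow_sub_pow _ _ n
      have heq : (MvPolynomial.C c * x ^ 2) - (y - Ψ) = -(y - Φ) := by
        rw [hCc]; ring
      rw [heq] at hdvd
      have key : x ^ (2 * n) - MvPolynomial.C ((c ^ n)⁻¹) * (y - Ψ) ^ n =
          MvPolynomial.C ((c ^ n)⁻¹) *
            ((MvPolynomial.C c * x ^ 2) ^ n - (y - Ψ) ^ n) := by
        rw [mul_sub, mul_pow, ← map_pow, ← mul_assoc, ← map_mul,
          inv_mul_cancel₀ (pow_ne_zero n hc0), map_one, one_mul, ← pow_mul]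
      rw [key]
      exact Dvd.dvd.mul_left ((neg_dvd).mp hdvd) _
  · intro Q hQ
    rw [pow_one, Ideal.mem_span_singleton'] at hQ
    obtain ⟨g, hg⟩ := hQ
    set f : Fin 2 → Polynomial ℝ := ![Polynomial.X, φ] with hf
    set e := MvPolynomial.aeval (R := ℝ) f with he
    have hex : e x = Polynomial.X := by simp [he, hf, hx]
    have hey : e y = φ := by simp [he, hf, hy]
    have heΦ : e Φ = φ := by
      rw [hΦ, ← Polynomial.aeval_algHom_apply, hex, Polynomial.aeval_X_left_apply]
    have h0 : e (y - Φ) = 0 := by rw [map_sub, hey, heΦ, sub_self]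
    have happ := congrArg e hg
    rw [map_mul, h0, mul_zero, map_sub, map_pow, hex] at happ
    have heQ : e Q = Polynomial.X ^ (2 * n) := (sub_eq_zero.mp happ.symm).symm
    have hdeg : (e Q).natDegree = 2 * n := by
      rw [heQ, Polynomial.natDegree_X_pow]
    have hbound : (e Q).natDegree ≤ 2 * Q.totalDegree := by
      refine natDegree_aeval_le f ?_ Q
      intro i
      fin_cases i <;> simp [hf, hnd]
    omega
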